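/- Under the same projected gradient descent setup with step sizes $\eta_t = \eta_1/\sqrt{t}$, weights $w_t = t^\alpha$, convex functions $f_t: \Omega \to \mathbb{R}$ with subgradients $g_t \in \partial f_t(x_t)$, $\|g_t\| \leq G$, and diameter bound $D$: if $1/2 \leq \alpha$, then $\frac{1}{\sum_{t=1}^T t^\alpha} \sum_{t=1}^T t^\alpha (f_t(x_t) - f_t(x_*)) \leq \frac{(\alpha+1)D^2}{2\eta_1 \sqrt{T}} + \frac{(\alpha+1)\eta_1 G^2}{\sqrt{T}}$. -/

import Mathlib

set_option maxHeartbeats 1000000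

open Finset

private lemma abel_bound (c a : ℕ → ℝ) (D2 : ℝ) :
    ∀ T : ℕ, 1 ≤ T →
    (∀ t, 1 ≤ t → t ≤ T → 0 ≤ c t) →
    (∀ t, 1 ≤ t → t + 1 ≤ T → c t ≤ c (t + 1)) →
    (∀ t, 0 ≤ a t) →
    (∀ t, 1 ≤ t → t ≤ T + 1 → a t ≤ D2) →
    ∑ t ∈ Icc 1 T, c t * (a t - a (t + 1)) ≤ c T * (D2 - a (T + 1)) := by
  intro T hT
  induction T, hT using Nat.le_induction with
  | base =>
    intro hc _ ha0 haD
    rw [show Icc 1 1 = {1} from rfl, sum_singleton]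
    have h1 := hc 1 le_rfl le_rfl
    have h2 := haD 1 le_rfl (by norm_num)
    nlinarith
  | succ T hT ih =>
    intro hc hmono ha0 haD
    rw [Finset.sum_Icc_succ_top (by omega)]
    have hih := ih (fun t h1 h2 => hc t h1 (by omega))
      (fun t h1 h2 => hmono t h1 (by omega)) ha0
      (fun t h1 h2 => haD t h1 (by omega))
    have h1 : c T ≤ c (T + 1) := hmono T hT (by omega)
    have h2 : a (T + 1) ≤ D2 := haD (T + 1) (by omega) (by omega)
    have h3 : 0 ≤ c (T + 1) := hc (T + 1) (by omega) le_rfl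
    have h4 := ha0 (T + 1)
    have h5 := ha0 (T + 2)
    nlinarith

private lemma sum_rpow_lower (α : ℝ) (hα : 0 ≤ α) :
    ∀ T : ℕ, (T : ℝ) ^ (α + 1) / (α + 1) ≤ ∑ t ∈ Icc 1 T, (t : ℝ) ^ α := by
  intro T
  have hα1 : (0:ℝ) < α + 1 := by linarith
  induction T with
  | zero =>
    simp [Real.zero_rpow (by linarith : α + 1 ≠ 0)]
  | succ T ih =>
    rw [Finset.sum_Icc_succ_top (by omega)]
    have hu : (0:ℝ) < (T:ℝ) + 1 := by positivity
    have step : ((T:ℝ) + 1) ^ (α + 1) - (T:ℝ) ^ (α + 1) ≤ (α + 1) * ((T:ℝ) + 1) ^ α := by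
      have hb := one_add_mul_self_le_rpow_one_add
        (show (-1:ℝ) ≤ -(1 / ((T:ℝ) + 1)) by
          rw [neg_le_neg_iff]
          rw [div_le_one hu]; linarith)
        (show (1:ℝ) ≤ α + 1 by linarith)
      have h1s : (1 : ℝ) + -(1 / ((T:ℝ) + 1)) = (T:ℝ) / ((T:ℝ) + 1) := by
        field_simp
        ring
      rw [h1s] at hb
      have hdiv : ((T:ℝ) / ((T:ℝ) + 1)) ^ (α + 1)
          = (T:ℝ) ^ (α + 1) / ((T:ℝ) + 1) ^ (α + 1) :=
        Real.div_rpow (Nat.cast_nonneg T) (le_of_lt hu) _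
      rw [hdiv] at hb
      have hmul := mul_le_mul_of_nonneg_right hb
        (le_of_lt (Real.rpow_pos_of_pos hu (α + 1)))
      rw [div_mul_cancel₀ _ (by positivity : ((T:ℝ) + 1) ^ (α + 1) ≠ 0)] at hmul
      have hexp : ((T:ℝ) + 1) ^ (α + 1) = ((T:ℝ) + 1) ^ α * ((T:ℝ) + 1) :=
        Real.rpow_add_one (ne_of_gt hu) α
      rw [hexp] at hmul ⊢
      have : (1 + (α + 1) * -(1 / ((T:ℝ) + 1))) * (((T:ℝ) + 1) ^ α * ((T:ℝ) + 1))
          = ((T:ℝ) + 1) ^ α * ((T:ℝ) + 1) - (α + 1) * ((T:ℝ) + 1) ^ α := by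
        field_simp; ring
      rw [this] at hmul
      linarith
    push_cast
    rw [div_le_iff₀ hα1] at ih ⊢
    nlinarith [step]

theorem stmt_10 (d : ℕ) (Ω : Set (EuclideanSpace ℝ (Fin d)))
    (hclosed : IsClosed Ω) (hconv : Convex ℝ Ω)
    (D G η₁ α : ℝ) (hD : 0 ≤ D) (hG : 0 ≤ G) (hη₁ : 0 < η₁) (hα : 1 / 2 ≤ α)
    (hdiam : ∀ x ∈ Ω, ∀ y ∈ Ω, ‖x - y‖ ≤ D)
    (T : ℕ) (hT : 1 ≤ T)
    (x g : ℕ → EuclideanSpace ℝ (Fin d))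
    (f : ℕ → EuclideanSpace ℝ (Fin d) → ℝ)
    (hfconv : ∀ t, 1 ≤ t → t ≤ T → ConvexOn ℝ Ω (f t))
    (hsubgrad : ∀ t, 1 ≤ t → t ≤ T → ∀ y ∈ Ω,
      f t (x t) + (inner ℝ (g t) (y - x t) : ℝ) ≤ f t y)
    (η : ℕ → ℝ) (hη : ∀ t, 1 ≤ t → η t = η₁ / Real.sqrt t)
    (hxΩ : ∀ t, 1 ≤ t → t ≤ T + 1 → x t ∈ Ω)
    (hgG : ∀ t, 1 ≤ t → t ≤ T → ‖g t‖ ≤ G)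
    (hproj : ∀ t, 1 ≤ t → t ≤ T → ∀ y ∈ Ω,
      ‖x (t + 1) - (x t - η t • g t)‖ ≤ ‖y - (x t - η t • g t)‖)
    (xstar : EuclideanSpace ℝ (Fin d)) (hxstar : xstar ∈ Ω) :
    (1 / ∑ t ∈ Icc 1 T, (t : ℝ) ^ α) *
      ∑ t ∈ Icc 1 T, (t : ℝ) ^ α * (f t (x t) - f t xstar) ≤
      (α + 1) * D ^ 2 / (2 * η₁ * Real.sqrt T) +
      (α + 1) * η₁ * G ^ 2 / Real.sqrt T := by
  have hT0 : (0:ℝ) < T := by exact_mod_cast hT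
  have hsT : 0 < Real.sqrt T := Real.sqrt_pos.mpr hT0
  have hα1 : (0:ℝ) < α + 1 := by linarith
  set a : ℕ → ℝ := fun t => ‖x t - xstar‖ ^ 2 with ha
  set c : ℕ → ℝ := fun t => (t:ℝ) ^ (α + 1/2) / (2 * η₁) with hc
  -- per-step bound
  have key : ∀ t ∈ Icc 1 T, (t:ℝ) ^ α * (f t (x t) - f t xstar) ≤
      c t * (a t - a (t + 1)) + η₁ * (t:ℝ) ^ (α - 1/2) * G ^ 2 / 2 := by
    intro t ht
    rw [mem_Icc] at ht
    obtain ⟨ht1, htT⟩ := ht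
    have htpos : (0:ℝ) < t := by exact_mod_cast ht1
    have hst : 0 < Real.sqrt t := Real.sqrt_pos.mpr htpos
    have hsq : Real.sqrt t * Real.sqrt t = (t:ℝ) := Real.mul_self_sqrt (le_of_lt htpos)
    have hηt : η t = η₁ / Real.sqrt t := hη t ht1
    have hηtpos : 0 < η t := by rw [hηt]; positivity
    have hrw1 : (t:ℝ) ^ (α + 1/2) = (t:ℝ) ^ α * Real.sqrt t := by
      rw [Real.rpow_add htpos, Real.sqrt_eq_rpow]
    have hrw2 : (t:ℝ) ^ (α - 1/2) = (t:ℝ) ^ α / Real.sqrt t := by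
      rw [Real.rpow_sub htpos, Real.sqrt_eq_rpow]
    have hwα : (0:ℝ) ≤ (t:ℝ) ^ α := le_of_lt (Real.rpow_pos_of_pos htpos α)
    -- subgradient inequality
    have h1 : f t (x t) - f t xstar ≤ inner ℝ (g t) (x t - xstar) := by
      have hs := hsubgrad t ht1 htT xstar hxstar
      have hneg : (inner ℝ (g t) (xstar - x t) : ℝ) = - inner ℝ (g t) (x t - xstar) := by
        rw [show xstar - x t = -(x t - xstar) by abel, inner_neg_right]
      rw [hneg] at hs
      linarith
    -- projection step
    set z : EuclideanSpace ℝ (Fin d) := x t - η t • g t with hz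
    have hx1 : x (t + 1) ∈ Ω := hxΩ (t + 1) (by omega) (by omega)
    haveI : Nonempty ↑Ω := ⟨⟨xstar, hxstar⟩⟩
    have hbdd : BddBelow (Set.range fun w : Ω => ‖z - (w : EuclideanSpace ℝ (Fin d))‖) := by
      refine ⟨0, ?_⟩
      rintro r ⟨w, rfl⟩
      exact norm_nonneg _
    have hle : ∀ w : Ω, ‖z - x (t + 1)‖ ≤ ‖z - (w : EuclideanSpace ℝ (Fin d))‖ := by
      intro w
      rw [norm_sub_rev z, norm_sub_rev z]
      exact hproj t ht1 htT w w.2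
    have hinf : ‖z - x (t + 1)‖ = ⨅ w : Ω, ‖z - w‖ :=
      le_antisymm (le_ciInf hle) (ciInf_le hbdd ⟨x (t + 1), hx1⟩)
    have hobtuse : (inner ℝ (z - x (t + 1)) (xstar - x (t + 1)) : ℝ) ≤ 0 :=
      (norm_eq_iInf_iff_real_inner_le_zero hconv hx1).mp hinf xstar hxstar
    have h2 : a (t + 1) ≤ ‖z - xstar‖ ^ 2 := by
      have hdecomp : z - xstar = (z - x (t + 1)) + (x (t + 1) - xstar) := by abel
      rw [hdecomp, norm_add_sq_real]
      have hswap : (inner ℝ (z - x (t + 1)) (x (t + 1) - xstar) : ℝ)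
          = - inner ℝ (z - x (t + 1)) (xstar - x (t + 1)) := by
        rw [show x (t + 1) - xstar = -(xstar - x (t + 1)) by abel, inner_neg_right]
      rw [hswap]
      have := sq_nonneg ‖z - x (t + 1)‖
      simp only [ha]
      nlinarith
    have h3 : ‖z - xstar‖ ^ 2 = a t - 2 * η t * inner ℝ (g t) (x t - xstar)
        + (η t) ^ 2 * ‖g t‖ ^ 2 := by
      have hdecomp : z - xstar = (x t - xstar) - η t • g t := by rw [hz]; abel
      rw [hdecomp, norm_sub_sq_real, real_inner_smul_right, norm_smul]
      simp only [ha]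
      rw [real_inner_comm]
      rw [mul_pow, Real.norm_eq_abs, sq_abs]
      ring
    have hgg : ‖g t‖ ^ 2 ≤ G ^ 2 := by
      have := hgG t ht1 htT
      nlinarith [norm_nonneg (g t)]
    -- combine
    have h6 : (t:ℝ) ^ α * (f t (x t) - f t xstar) ≤ (t:ℝ) ^ α * inner ℝ (g t) (x t - xstar) :=
      mul_le_mul_of_nonneg_left h1 hwα
    have h4 : 2 * η t * inner ℝ (g t) (x t - xstar)
        ≤ (a t - a (t + 1)) + (η t) ^ 2 * G ^ 2 := by
      nlinarith [sq_nonneg (η t)]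
    have h7 := mul_le_mul_of_nonneg_left h4
      (show (0:ℝ) ≤ (t:ℝ) ^ α / (2 * η t) by positivity)
    have hlhs : (t:ℝ) ^ α / (2 * η t) * (2 * η t * inner ℝ (g t) (x t - xstar))
        = (t:ℝ) ^ α * inner ℝ (g t) (x t - xstar) := by
      field_simp
    have hrhs : (t:ℝ) ^ α / (2 * η t) * ((a t - a (t + 1)) + (η t) ^ 2 * G ^ 2)
        = (t:ℝ) ^ α / (2 * η t) * (a t - a (t + 1)) + (t:ℝ) ^ α * η t * G ^ 2 / 2 := by
      field_simp
    rw [hlhs, hrhs] at h7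
    have hcrw : c t = (t:ℝ) ^ α / (2 * η t) := by
      simp only [hc]
      rw [hrw1, hηt]
      field_simp
    have hηrw : η₁ * (t:ℝ) ^ (α - 1/2) = (t:ℝ) ^ α * η t := by
      rw [hrw2, hηt]
      ring
    rw [hcrw, hηrw]
    linarith
  -- sum the per-step bounds
  have hsum : ∑ t ∈ Icc 1 T, (t:ℝ) ^ α * (f t (x t) - f t xstar)
      ≤ (∑ t ∈ Icc 1 T, c t * (a t - a (t + 1)))
        + ∑ t ∈ Icc 1 T, η₁ * (t:ℝ) ^ (α - 1/2) * G ^ 2 / 2 := by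
    rw [← Finset.sum_add_distrib]
    exact Finset.sum_le_sum key
  -- Abel bound for the telescoping part
  have habel : ∑ t ∈ Icc 1 T, c t * (a t - a (t + 1)) ≤ c T * (D ^ 2 - a (T + 1)) := by
    refine abel_bound c a (D ^ 2) T hT (fun t h1 h2 => by positivity)
      (fun t h1 h2 => ?_) (fun t => sq_nonneg _) (fun t h1 h2 => ?_)
    · simp only [hc]
      have hmono : ((t:ℕ):ℝ) ^ (α + 1/2) ≤ (((t+1:ℕ)):ℝ) ^ (α + 1/2) :=
        Real.rpow_le_rpow (Nat.cast_nonneg t) (by exact_mod_cast Nat.le_succ t)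
          (by linarith)
      have h2η : (0:ℝ) < 2 * η₁ := by linarith
      exact div_le_div_of_nonneg_right hmono h2η.le
    · have hxt : x t ∈ Ω := hxΩ t h1 h2
      have := hdiam (x t) hxt xstar hxstar
      simp only [ha]
      nlinarith [norm_nonneg (x t - xstar)]
  set P : ℝ := (T:ℝ) ^ (α + 1/2) with hP
  have hPpos : 0 < P := Real.rpow_pos_of_pos hT0 _
  have htel : ∑ t ∈ Icc 1 T, c t * (a t - a (t + 1)) ≤ P / (2 * η₁) * D ^ 2 := by
    refine habel.trans ?_
    have h0 : (0:ℝ) ≤ a (T + 1) := sq_nonneg _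
    have hcT : c T = P / (2 * η₁) := by rw [hc, hP]
    rw [hcT]
    nlinarith [div_pos hPpos (by linarith : (0:ℝ) < 2 * η₁)]
  -- bound the second sum
  have hstep2 : ∑ t ∈ Icc 1 T, η₁ * (t:ℝ) ^ (α - 1/2) * G ^ 2 / 2
      ≤ η₁ * P * G ^ 2 / 2 := by
    have hbound : ∀ t ∈ Icc 1 T, η₁ * (t:ℝ) ^ (α - 1/2) * G ^ 2 / 2
        ≤ η₁ * (T:ℝ) ^ (α - 1/2) * G ^ 2 / 2 := by
      intro t ht
      rw [mem_Icc] at ht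
      have hle : (t:ℝ) ^ (α - 1/2) ≤ (T:ℝ) ^ (α - 1/2) :=
        Real.rpow_le_rpow (Nat.cast_nonneg t) (by exact_mod_cast ht.2) (by linarith)
      have hnn : (0:ℝ) ≤ η₁ * G ^ 2 * ((T:ℝ) ^ (α - 1/2) - (t:ℝ) ^ (α - 1/2)) :=
        mul_nonneg (mul_nonneg hη₁.le (sq_nonneg G)) (sub_nonneg.mpr hle)
      linarith
    calc ∑ t ∈ Icc 1 T, η₁ * (t:ℝ) ^ (α - 1/2) * G ^ 2 / 2
        ≤ ∑ _t ∈ Icc 1 T, η₁ * (T:ℝ) ^ (α - 1/2) * G ^ 2 / 2 := Finset.sum_le_sum hbound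
      _ = (T:ℝ) * (η₁ * (T:ℝ) ^ (α - 1/2) * G ^ 2 / 2) := by
          rw [Finset.sum_const, Nat.card_Icc]
          simp [nsmul_eq_mul]
      _ = η₁ * ((T:ℝ) * (T:ℝ) ^ (α - 1/2)) * G ^ 2 / 2 := by ring
      _ = η₁ * P * G ^ 2 / 2 := by
          congr 2
          rw [hP]
          nth_rewrite 1 [show (T:ℝ) = (T:ℝ) ^ (1:ℝ) from (Real.rpow_one _).symm]
          rw [← Real.rpow_add hT0]
          congr 1
          ring
  have hB : ∑ t ∈ Icc 1 T, (t:ℝ) ^ α * (f t (x t) - f t xstar)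
      ≤ P / (2 * η₁) * D ^ 2 + η₁ * P * G ^ 2 / 2 := by linarith
  -- lower bound on the weight sum
  have hW : P * Real.sqrt T / (α + 1) ≤ ∑ t ∈ Icc 1 T, (t:ℝ) ^ α := by
    have h := sum_rpow_lower α (by linarith) T
    have heq : (T:ℝ) ^ (α + 1) = P * Real.sqrt T := by
      rw [hP, Real.sqrt_eq_rpow, ← Real.rpow_add hT0]
      congr 1
      ring
    rw [heq] at h
    exact h
  have hWpos : (0:ℝ) < ∑ t ∈ Icc 1 T, (t:ℝ) ^ α :=
    lt_of_lt_of_le (by positivity) hW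
  have hBnn : (0:ℝ) ≤ P / (2 * η₁) * D ^ 2 + η₁ * P * G ^ 2 / 2 := by positivity
  have hfrac : 1 / ∑ t ∈ Icc 1 T, (t:ℝ) ^ α ≤ (α + 1) / (P * Real.sqrt T) := by
    rw [show (α + 1) / (P * Real.sqrt T) = 1 / (P * Real.sqrt T / (α + 1)) by
      rw [one_div_div]]
    exact one_div_le_one_div_of_le (by positivity) hW
  have hmain : (1 / ∑ t ∈ Icc 1 T, (t:ℝ) ^ α) *
      ∑ t ∈ Icc 1 T, (t:ℝ) ^ α * (f t (x t) - f t xstar)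
      ≤ (α + 1) / (P * Real.sqrt T) * (P / (2 * η₁) * D ^ 2 + η₁ * P * G ^ 2 / 2) := by
    calc (1 / ∑ t ∈ Icc 1 T, (t:ℝ) ^ α) *
        ∑ t ∈ Icc 1 T, (t:ℝ) ^ α * (f t (x t) - f t xstar)
        ≤ (1 / ∑ t ∈ Icc 1 T, (t:ℝ) ^ α) *
          (P / (2 * η₁) * D ^ 2 + η₁ * P * G ^ 2 / 2) := by
          exact mul_le_mul_of_nonneg_left hB (by positivity)
      _ ≤ (α + 1) / (P * Real.sqrt T) * (P / (2 * η₁) * D ^ 2 + η₁ * P * G ^ 2 / 2) :=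
          mul_le_mul_of_nonneg_right hfrac hBnn
  refine hmain.trans ?_
  have hexp : (α + 1) / (P * Real.sqrt T) * (P / (2 * η₁) * D ^ 2 + η₁ * P * G ^ 2 / 2)
      = (α + 1) * D ^ 2 / (2 * η₁ * Real.sqrt T) + (α + 1) * η₁ * G ^ 2 / (2 * Real.sqrt T) := by
    field_simp
  rw [hexp]
  have hlast : (α + 1) * η₁ * G ^ 2 / (2 * Real.sqrt T) ≤ (α + 1) * η₁ * G ^ 2 / Real.sqrt T := by
    rw [div_le_div_iff₀ (by positivity) hsT]
    nlinarith [mul_nonneg (mul_nonneg (le_of_lt hα1) (le_of_lt hη₁)) (sq_nonneg G)]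
  linarith
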